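/- Let n ≥ 1, let α be a string, and let P be a set of strings such that there is no n-good tree from α for P. If V is an n-good tree from α, then there exists a string β extending an element of V such that there is no n-good tree from β for P; moreover, β can be chosen to be an element of V itself. -/
import Mathlib


/-- A *tree*: a finite set of pairwise incomparable strings (antichain under
the prefix/extension order), where a string is a finite sequence of naturals. -/
def IsTree (T : Finset (List ℕ)) : Prop :=
  ∀ σ ∈ T, ∀ τ ∈ T, σ <+: τ → σ = τ

/-- `T` is `a`-good from `σ`: `T` is nonempty, every string in `T` extends `σ`,
and for every `τ` with `σ ⊆ τ ⊊ ρ` for some `ρ ∈ T`, at least `a` immediate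
successors `τ*k` of `τ` are initial segments of elements of `T`. -/
def GoodFrom (a : ℕ) (T : Finset (List ℕ)) (σ : List ℕ) : Prop :=
  T.Nonempty ∧ (∀ ρ ∈ T, σ <+: ρ) ∧
    ∀ τ : List ℕ, (∃ ρ ∈ T, σ <+: τ ∧ τ <+: ρ ∧ τ ≠ ρ) →
      a ≤ {k : ℕ | ∃ ρ ∈ T, τ ++ [k] <+: ρ}.ncard

/-- `T` is `a`-good from `σ` for `P`: in addition `T ⊆ P`. -/
def GoodFromFor (a : ℕ) (T : Finset (List ℕ)) (σ : List ℕ) (P : Set (List ℕ)) : Prop :=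
  GoodFrom a T σ ∧ ↑T ⊆ P

lemma succ_set_finite (S : Finset (List ℕ)) (τ : List ℕ) :
    {k : ℕ | ∃ ρ ∈ S, τ ++ [k] <+: ρ}.Finite := by
  apply Set.Finite.subset (S.image (fun ρ => ρ.getD τ.length 0)).finite_toSet
  rintro k ⟨ρ, hρ, t, rfl⟩
  simp only [Finset.coe_image, Set.mem_image, Finset.mem_coe]
  refine ⟨τ ++ [k] ++ t, hρ, ?_⟩
  rw [List.append_assoc, List.getD_append_right _ _ _ _ le_rfl]
  simp

/-- If there is no `n`-good tree from `α` for `P` and `V` is an `n`-good tree from `α`,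
then some string `β` extending an element of `V` — indeed some `β ∈ V` itself — is such
that there is no `n`-good tree from `β` for `P`. -/
theorem no_good_tree_from_element (n : ℕ) (hn : 1 ≤ n) (α : List ℕ) (P : Set (List ℕ))
    (hP : ¬ ∃ S : Finset (List ℕ), IsTree S ∧ GoodFromFor n S α P)
    (V : Finset (List ℕ)) (hV : IsTree V) (hgood : GoodFrom n V α) :
    ∃ β ∈ V, (∃ v ∈ V, v <+: β) ∧
      ¬ ∃ S : Finset (List ℕ), IsTree S ∧ GoodFromFor n S β P := by
  by_contra h
  push_neg at h
  have h' : ∀ β ∈ V, ∃ S : Finset (List ℕ), IsTree S ∧ GoodFromFor n S β P := by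
    intro β hβ
    exact h β hβ ⟨β, hβ, List.prefix_refl β⟩
  choose! f hf using h'
  set S : Finset (List ℕ) := V.biUnion f with hS
  have hmemS : ∀ ρ, ρ ∈ S ↔ ∃ β ∈ V, ρ ∈ f β := by
    intro ρ; simp [hS]
  -- every element of f β extends β
  have hext : ∀ β ∈ V, ∀ ρ ∈ f β, β <+: ρ := fun β hβ ρ hρ =>
    (hf β hβ).2.1.2.1 ρ hρ
  apply hP
  refine ⟨S, ?_, ⟨⟨?_, ?_, ?_⟩, ?_⟩⟩
  · -- tree
    intro σ hσ τ hτ hpre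
    obtain ⟨β, hβ, hσβ⟩ := (hmemS σ).1 hσ
    obtain ⟨γ, hγ, hτγ⟩ := (hmemS τ).1 hτ
    have hβσ := hext β hβ σ hσβ
    have hγτ := hext γ hγ τ hτγ
    have hβτ : β <+: τ := hβσ.trans hpre
    have : β = γ := by
      rcases List.prefix_or_prefix_of_prefix hβτ hγτ with hc | hc
      · exact hV β hβ γ hγ hc
      · exact (hV γ hγ β hβ hc).symm
    subst this
    exact (hf β hβ).1 σ hσβ τ hτγ hpre
  · -- nonempty
    obtain ⟨β, hβ⟩ := hgood.1
    obtain ⟨ρ, hρ⟩ := (hf β hβ).2.1.1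
    exact ⟨ρ, (hmemS ρ).2 ⟨β, hβ, hρ⟩⟩
  · -- extends α
    intro ρ hρ
    obtain ⟨β, hβ, hρβ⟩ := (hmemS ρ).1 hρ
    exact (hgood.2.1 β hβ).trans (hext β hβ ρ hρβ)
  · -- branching
    rintro τ ⟨ρ, hρ, hατ, hτρ, hτne⟩
    obtain ⟨β, hβ, hρβ⟩ := (hmemS ρ).1 hρ
    have hβρ := hext β hβ ρ hρβ
    rcases List.prefix_or_prefix_of_prefix hτρ hβρ with hc | hc
    · -- τ <+: β
      by_cases hτβ : τ = β
      · -- τ = β, use goodness of f β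
        subst hτβ
        have := (hf τ hβ).2.1.2.2 τ ⟨ρ, hρβ, List.prefix_refl τ, hτρ, hτne⟩
        refine this.trans (Set.ncard_le_ncard ?_ (succ_set_finite S τ))
        rintro k ⟨ρ', hρ', hk⟩
        exact ⟨ρ', (hmemS ρ').2 ⟨τ, hβ, hρ'⟩, hk⟩
      · -- τ ⊊ β, use goodness of V
        have := hgood.2.2 τ ⟨β, hβ, hατ, hc, hτβ⟩
        refine this.trans (Set.ncard_le_ncard ?_ (succ_set_finite S τ))
        rintro k ⟨γ, hγ, hk⟩
        obtain ⟨ρ', hρ'⟩ := (hf γ hγ).2.1.1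
        exact ⟨ρ', (hmemS ρ').2 ⟨γ, hγ, hρ'⟩, hk.trans (hext γ hγ ρ' hρ')⟩
    · -- β <+: τ
      have := (hf β hβ).2.1.2.2 τ ⟨ρ, hρβ, hc, hτρ, hτne⟩
      refine this.trans (Set.ncard_le_ncard ?_ (succ_set_finite S τ))
      rintro k ⟨ρ', hρ', hk⟩
      exact ⟨ρ', (hmemS ρ').2 ⟨β, hβ, hρ'⟩, hk⟩
  · -- S ⊆ P
    intro ρ hρ
    obtain ⟨β, hβ, hρβ⟩ := (hmemS ρ).1 (by exact_mod_cast hρ)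
    exact (hf β hβ).2.2 hρβ
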